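/- Let p ≥ 1, L > 0, and let m ≥ 1 and N ≥ 2 be integers with T = N·m. Take 𝒳 = [−1,1] ⊆ ℝ and the OCO with finite memory instance with memory length m and the p-norm, so h_t = (x_t, x_{t−1}, …, x_{t−m+1}) (with x_s = 0 for s ≤ 0). For each sign vector ε ∈ {−1,+1}^N define losses f_t^ε : ℝ^m → ℝ by: f_t^ε = 0 for t ≤ m; and for t > m lying in block n (i.e., (n−1)m < t ≤ nm), f_t^ε(h_t) = ε_n · L · m^{(1−p)/p} · (x_{t−m+1} + x_{t−m+2} + ⋯ + x_{(n−1)m+1}), i.e. the linear functional summing the coordinates of the history from its oldest entry up to and including the decision made in the first round of block n, scaled by ε_n L m^{(1−p)/p}. (Each f_t^ε is linear, hence convex, and is L-Lipschitz in the ℓ^p norm on ℝ^m.) Then there is an absolute constant c > 0 such that for every adaptive algorithm — every family of functions x_t : {−1,+1}^N → [−1,1] (t = 1, …, T) such that x_t(ε) depends only on ε_1, …, ε_{⌈(t−1)/m⌉} — the expected policy regret satisfies E_{ε uniform on {−1,+1}^N}[ Σ_{t=1}^{T} f_t^ε(h_t(ε)) − min_{x ∈ [−1,1]} Σ_{t=1}^{T}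 f̄_t^ε(x) ] ≥ c · L · √(T · m^{(p+2)/p}). -/

import Mathlib

/-- The adversarial loss value for the finite-memory lower bound.  For `t ≤ m` the loss is `0`.
For `t > m` lying in block `n = ⌈t/m⌉` (0-indexed block `b = (t-1)/m`), the loss applied to a
decision sequence `xs` is `ε_n ⬝ L ⬝ m^{(1−p)/p} ⬝ (xs_{t−m+1} + ⋯ + xs_{(n−1)m+1})`, i.e. the sum
of the decisions in the current history up to and including the first round of block `n`. -/
noncomputable def fVal9 (p L : ℝ) (m N : ℕ) (ε : Fin N → Bool) (xs : ℕ → ℝ) (t : ℕ) : ℝ :=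
  if t ≤ m then 0
  else
    (if h : (t - 1) / m < N then (if ε ⟨(t - 1) / m, h⟩ then (1:ℝ) else -1) else 0)
      * L * (m : ℝ) ^ ((1 - p) / p)
      * ∑ j ∈ Finset.Icc (t - m + 1) ((t - 1) / m * m + 1), xs j

noncomputable def rad9 (b : Bool) : ℝ := if b then 1 else -1

lemma sum_blocks9 (m : ℕ) (f : ℕ → ℝ) (N : ℕ) :
    ∑ t ∈ Finset.Ioc 0 (N*m), f t
      = ∑ b ∈ Finset.range N, ∑ r ∈ Finset.Ioc 0 m, f (b*m+r) := by
  induction N with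
  | zero => simp
  | succ N ih =>
    rw [Finset.range_add_one, Finset.sum_insert Finset.notMem_range_self, ← ih]
    have h1 : (0:ℕ) ≤ N*m := Nat.zero_le _
    have h2 : N*m ≤ (N+1)*m := by nlinarith
    rw [← Finset.sum_Ioc_consecutive f h1 h2]
    have : ∑ t ∈ Finset.Ioc (N*m) ((N+1)*m), f t = ∑ r ∈ Finset.Ioc 0 m, f (N*m+r) := by
      have hmap := Finset.map_add_left_Ioc 0 m (N*m)
      simp only [Nat.add_zero] at hmap
      rw [show (N+1)*m = N*m + m by ring, ← hmap, Finset.sum_map]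
      rfl
    rw [this]
    ring

-- block value of fVal9
lemma fVal9_block (p L : ℝ) (m N : ℕ) (hm : 1 ≤ m) (b r : ℕ) (hr1 : 1 ≤ r) (hrm : r ≤ m)
    (hb : b < N) (hb1 : 1 ≤ b) (ε : Fin N → Bool) (xs : ℕ → ℝ) :
    fVal9 p L m N ε xs (b*m+r)
      = rad9 (ε ⟨b, hb⟩) * L * (m:ℝ) ^ ((1-p)/p)
        * ∑ j ∈ Finset.Icc (b*m+r-m+1) (b*m+1), xs j := by
  have htm : ¬ (b*m+r ≤ m) := by nlinarith
  have hdiv : (b*m+r-1)/m = b := by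
    have h1 : b*m+r-1 = m*b + (r-1) := by rw [mul_comm]; omega
    rw [h1, Nat.mul_add_div (by omega), Nat.div_eq_of_lt (by omega)]
    omega
  rw [fVal9, if_neg htm, hdiv, dif_pos hb, rad9]

lemma fVal9_block0 (p L : ℝ) (m N : ℕ) (r : ℕ) (hrm : r ≤ m) (ε : Fin N → Bool)
    (xs : ℕ → ℝ) : fVal9 p L m N ε xs (0*m+r) = 0 := by
  rw [fVal9, if_pos (by omega)]

noncomputable def W9 (N : ℕ) (ε : Fin N → Bool) : ℝ :=
  ∑ i : Fin N, if (i : ℕ) = 0 then 0 else rad9 (ε i)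

lemma gaussk9 : ∀ m : ℕ, ∑ k ∈ Finset.Ioc 0 m, ((k : ℕ) : ℝ) = m * (m + 1) / 2 := by
  intro m
  induction m with
  | zero => simp
  | succ m ih =>
    rw [Finset.sum_Ioc_succ_top (Nat.zero_le _), ih]
    push_cast; ring

lemma gauss9 (m : ℕ) : ∑ r ∈ Finset.Ioc 0 m, ((m + 1 - r : ℕ) : ℝ) = m * (m + 1) / 2 := by
  have h1 : ∀ r ∈ Finset.Ioc 0 m, ((m + 1 - r : ℕ) : ℝ) = ((m:ℝ) + 1) - (r:ℝ) := by
    intro r hr; rw [Finset.mem_Ioc] at hr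
    have : (↑(m + 1 - r) : ℝ) = ((m+1 : ℕ) : ℝ) - (r:ℝ) := by
      rw [Nat.cast_sub (by omega)]
    rw [this]; push_cast; ring
  rw [Finset.sum_congr rfl h1, Finset.sum_sub_distrib, Finset.sum_const, Nat.card_Ioc,
    gaussk9, Nat.sub_zero]
  push_cast
  ring

lemma const_sum9 (p L : ℝ) (m N : ℕ) (hm : 1 ≤ m) (ε : Fin N → Bool) (y : ℝ) :
    ∑ t ∈ Finset.Icc 1 (N*m), fVal9 p L m N ε (fun _ => y) t
      = L * (m:ℝ) ^ ((1-p)/p) * ((m:ℝ) * (m+1) / 2) * W9 N ε * y := by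
  have hIcc : Finset.Icc 1 (N*m) = Finset.Ioc 0 (N*m) := by
    rw [← Finset.Icc_add_one_left_eq_Ioc, zero_add]
  rw [hIcc, sum_blocks9]
  have hblock : ∀ b ∈ Finset.range N,
      ∑ r ∈ Finset.Ioc 0 m, fVal9 p L m N ε (fun _ => y) (b*m+r)
        = (if h : b < N then (if (b:ℕ) = 0 then 0 else rad9 (ε ⟨b, h⟩)) else 0)
            * (L * (m:ℝ) ^ ((1-p)/p) * ((m:ℝ) * (m+1) / 2) * y) := by
    intro b hb
    rw [Finset.mem_range] at hb
    rw [dif_pos hb]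
    by_cases hb0 : b = 0
    · subst hb0
      rw [show (if (0:ℕ) = 0 then (0:ℝ) else rad9 (ε ⟨0, hb⟩)) = 0 by simp, zero_mul,
        zero_mul]
      apply Finset.sum_eq_zero
      intro r hr
      rw [Finset.mem_Ioc] at hr
      simp [fVal9, hr.2]
    · rw [if_neg hb0]
      have hb1 : 1 ≤ b := by omega
      have hsum : ∀ r ∈ Finset.Ioc 0 m,
          fVal9 p L m N ε (fun _ => y) (b*m+r)
            = rad9 (ε ⟨b, hb⟩) * (L * (m:ℝ) ^ ((1-p)/p)) * (((m+1-r : ℕ) : ℝ) * y) := by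
        intro r hr
        rw [Finset.mem_Ioc] at hr
        rw [fVal9_block p L m N hm b r hr.1 hr.2 hb hb1 ε]
        rw [Finset.sum_const, Nat.card_Icc]
        have hcard : b*m+1+1 - (b*m+r-m+1) = m+1-r := by
          have h0 : m ≤ b*m := Nat.le_mul_of_pos_left m (by omega)
          omega
        rw [hcard, nsmul_eq_mul]
        ring
      rw [Finset.sum_congr rfl hsum, ← Finset.mul_sum, ← Finset.sum_mul, gauss9]
      ring
  rw [Finset.sum_congr rfl hblock, ← Finset.sum_mul]
  have hW : ∑ b ∈ Finset.range N,
      (if h : b < N then (if (b:ℕ) = 0 then (0:ℝ) else rad9 (ε ⟨b, h⟩)) else 0) = W9 N ε := by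
    rw [W9, ← Fin.sum_univ_eq_sum_range]
    apply Finset.sum_congr rfl
    intro i _
    rw [dif_pos i.isLt]
  rw [hW]
  ring

lemma sInf_linear9 (K : ℝ) :
    sInf ((fun y : ℝ => K * y) '' Set.Icc (-1:ℝ) 1) = -|K| := by
  apply IsLeast.csInf_eq
  constructor
  · rcases le_total 0 K with h | h
    · exact ⟨-1, ⟨le_refl _, by norm_num⟩, by rw [abs_of_nonneg h]; ring⟩
    · exact ⟨1, ⟨by norm_num, le_refl _⟩, by rw [abs_of_nonpos h]; ring⟩
  · rintro z ⟨y, hy, rfl⟩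
    have hy1 : |y| ≤ 1 := abs_le.2 ⟨hy.1, hy.2⟩
    have h1 : |K * y| ≤ |K| := by
      rw [abs_mul]
      nlinarith [abs_nonneg K, abs_nonneg y]
    have h2 := neg_abs_le (K * y)
    show -|K| ≤ K * y
    linarith

lemma alg_zero9 (p L : ℝ) (m N T : ℕ) (hm : 1 ≤ m) (hT : T = N*m)
    (x : (Fin N → Bool) → ℕ → ℝ)
    (hx : ∀ (t : ℕ) (ε ε' : Fin N → Bool), 1 ≤ t → t ≤ T →
      (∀ k : Fin N, (k : ℕ) < (t + m - 2) / m → ε k = ε' k) → x ε t = x ε' t) :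
    ∑ ε : Fin N → Bool, ∑ t ∈ Finset.Icc 1 T, fVal9 p L m N ε (x ε) t = 0 := by
  rw [Finset.sum_comm]
  apply Finset.sum_eq_zero
  intro t ht
  simp only [Finset.mem_Icc] at ht
  by_cases htm : t ≤ m
  · apply Finset.sum_eq_zero; intro ε _; simp [fVal9, htm]
  push_neg at htm
  have hmT : m < T := lt_of_lt_of_le htm ht.2
  set b := (t-1)/m with hb_def
  have hbN : b < N := by
    have h2 : (t-1)/m ≤ (N*m-1)/m := Nat.div_le_div_right (by omega)
    have h3 : (N*m-1)/m < N := by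
      rw [Nat.div_lt_iff_lt_mul (by omega)]
      have : 1 ≤ N*m := by omega
      omega
    omega
  have hb1 : 1 ≤ b := by
    rw [hb_def, Nat.le_div_iff_mul_le (by omega)]
    omega
  have hup : b*m+1 ≤ T := by
    calc b*m+1 ≤ b*m+m := by omega
    _ = (b+1)*m := by ring
    _ ≤ N*m := Nat.mul_le_mul_right m hbN
    _ = T := hT.symm
  apply Finset.sum_involution
    (fun ε _ => Function.update ε ⟨b, hbN⟩ (!(ε ⟨b, hbN⟩)))
  · intro ε _
    set i : Fin N := ⟨b, hbN⟩ with hi_def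
    set ε' := Function.update ε i (!(ε i)) with hε'_def
    have hxeq : ∀ j ∈ Finset.Icc (t-m+1) (b*m+1), x ε j = x ε' j := by
      intro j hj
      rw [Finset.mem_Icc] at hj
      apply hx j ε ε' (by omega) (le_trans hj.2 hup)
      intro k hk
      have hdb : (j+m-2)/m ≤ b := by
        calc (j+m-2)/m ≤ (b*m+m-1)/m := Nat.div_le_div_right (by omega)
          _ = b := by
            rw [show b*m+m-1 = m*b + (m-1) by rw [mul_comm]; omega,
              Nat.mul_add_div (by omega), Nat.div_eq_of_lt (by omega)]
            omega
      have hkb : (k : ℕ) < b := lt_of_lt_of_le hk hdb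
      rw [hε'_def, Function.update_of_ne]
      intro hcon
      rw [hi_def] at hcon
      have : (k:ℕ) = b := congrArg Fin.val hcon
      omega
    have hsum : ∑ j ∈ Finset.Icc (t-m+1) (b*m+1), x ε j
        = ∑ j ∈ Finset.Icc (t-m+1) (b*m+1), x ε' j := Finset.sum_congr rfl hxeq
    have hflip : ε' i = !(ε i) := Function.update_self i _ ε
    simp only [fVal9, if_neg (by omega : ¬ t ≤ m), ← hb_def, dif_pos hbN]
    rw [← hi_def, hsum, hflip]
    cases ε i <;> simp <;> ring
  · intro ε _ hne
    intro hcon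
    have := congrFun hcon ⟨b, hbN⟩
    rw [Function.update_self] at this
    exact Bool.not_ne_self _ this
  · intro ε _
    funext k
    by_cases hk : k = ⟨b, hbN⟩
    · subst hk
      rw [Function.update_self, Function.update_self, Bool.not_not]
    · rw [Function.update_of_ne hk, Function.update_of_ne hk]
  · intro ε _; exact Finset.mem_univ _



noncomputable def Ssum9 (n : ℕ) (ε : Fin n → Bool) : ℝ := ∑ i, rad9 (ε i)

lemma rad9_sq (b : Bool) : rad9 b ^ 2 = 1 := by cases b <;> simp [rad9]
lemma rad9_cube (b : Bool) : rad9 b ^ 3 = rad9 b := by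
  cases b <;> simp [rad9] <;> ring
lemma rad9_sum : ∑ b : Bool, rad9 b = 0 := by simp [rad9]

lemma sum_cons9 {n : ℕ} (F : (Fin (n+1) → Bool) → ℝ) :
    ∑ ε : Fin (n+1) → Bool, F ε = ∑ a : Bool, ∑ g : Fin n → Bool, F (Fin.cons a g) := by
  rw [← (Fin.consEquiv (fun _ : Fin (n+1) => Bool)).sum_comp F]
  rw [Fintype.sum_prod_type]
  rfl

lemma Ssum9_cons {n : ℕ} (a : Bool) (g : Fin n → Bool) :
    Ssum9 (n+1) (Fin.cons a g) = rad9 a + Ssum9 n g := by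
  simp [Ssum9, Fin.sum_univ_succ]

lemma moment2 (n : ℕ) : ∑ ε : Fin n → Bool, (Ssum9 n ε) ^ 2 = n * 2 ^ n := by
  induction n with
  | zero => simp [Ssum9]
  | succ n ih =>
    rw [sum_cons9 (fun ε => (Ssum9 (n+1) ε)^2)]
    have h : ∀ a g, (Ssum9 (n+1) (Fin.cons a g))^2
        = rad9 a ^ 2 + 2 * rad9 a * Ssum9 n g + Ssum9 n g ^ 2 := by
      intro a g; rw [Ssum9_cons]; ring
    simp only [h, rad9_sq]
    simp only [Finset.sum_add_distrib, Finset.sum_const, Finset.card_univ, ih,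
      ← Finset.sum_mul, ← Finset.mul_sum]
    rw [rad9_sum]
    simp [Fintype.card_fun]
    push_cast
    ring

lemma moment4 (n : ℕ) :
    ∑ ε : Fin n → Bool, (Ssum9 n ε) ^ 4 = (3 * n^2 - 2 * n) * 2 ^ n := by
  induction n with
  | zero => simp [Ssum9]
  | succ n ih =>
    rw [sum_cons9 (fun ε => (Ssum9 (n+1) ε)^4)]
    have h : ∀ a g, (Ssum9 (n+1) (Fin.cons a g))^4
        = Ssum9 n g ^ 4 + 4 * rad9 a ^ 3 * Ssum9 n g + 6 * rad9 a ^ 2 * Ssum9 n g ^ 2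
          + 4 * rad9 a * Ssum9 n g ^ 3 + rad9 a ^ 2 * rad9 a ^ 2 := by
      intro a g; rw [Ssum9_cons]; ring
    simp only [h, rad9_sq, rad9_cube, one_mul, mul_one]
    rw [Finset.sum_comm]
    have key : ∀ g : Fin n → Bool,
        ∑ a : Bool, (Ssum9 n g ^ 4 + 4 * rad9 a * Ssum9 n g + 6 * Ssum9 n g ^ 2
          + 4 * rad9 a * Ssum9 n g ^ 3 + 1)
        = 2 * Ssum9 n g ^ 4 + 12 * Ssum9 n g ^ 2 + 2 := by
      intro g
      rw [Fintype.sum_bool]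
      simp [rad9]; ring
    simp only [key, Finset.sum_add_distrib, Finset.sum_const, Finset.card_univ,
      ← Finset.mul_sum, ih, moment2, Fintype.card_fun, Fintype.card_bool, Fintype.card_fin,
      smul_eq_mul, mul_one]
    push_cast
    ring

lemma khintchine9 (n : ℕ) (hn : 1 ≤ n) :
    Real.sqrt ((n : ℝ) / 3) * 2 ^ n ≤ ∑ ε : Fin n → Bool, |Ssum9 n ε| := by
  classical
  set q : ℝ := 2 ^ n with hq_def
  have hq : (0:ℝ) < q := by positivity
  have hn1 : (1:ℝ) ≤ (n:ℝ) := by exact_mod_cast hn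
  set A : ℝ := ∑ ε : Fin n → Bool, |Ssum9 n ε| with hA_def
  set C : ℝ := ∑ ε : Fin n → Bool, |Ssum9 n ε| ^ 3 with hC_def
  have hA0 : 0 ≤ A := Finset.sum_nonneg fun ε _ => abs_nonneg _
  have hC0 : 0 ≤ C := Finset.sum_nonneg fun ε _ => pow_nonneg (abs_nonneg _) 3
  set B : ℝ := (n : ℝ) * q with hB_def
  set E : ℝ := (3 * (n:ℝ)^2 - 2 * n) * q with hE_def
  have hBpos : 0 < B := mul_pos (by linarith) hq
  have hEpos : 0 < E := by
    apply mul_pos _ hq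
    nlinarith
  -- Cauchy-Schwarz 1 : B^2 ≤ A * C
  have h1 : B ^ 2 ≤ A * C := by
    have hmt : ∀ ε : Fin n → Bool,
        Real.sqrt |Ssum9 n ε| * Real.sqrt (|Ssum9 n ε| ^ 3) = Ssum9 n ε ^ 2 := by
      intro ε
      rw [← Real.sqrt_mul (abs_nonneg _)]
      have h4 : |Ssum9 n ε| * |Ssum9 n ε| ^ 3 = (Ssum9 n ε ^ 2) ^ 2 := by
        have := sq_abs (Ssum9 n ε); nlinarith [sq_abs (Ssum9 n ε)]
      rw [h4, Real.sqrt_sq (sq_nonneg _)]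
    calc B ^ 2 = (∑ ε : Fin n → Bool, Ssum9 n ε ^ 2) ^ 2 := by
          rw [moment2]
      _ = (∑ ε : Fin n → Bool,
            Real.sqrt |Ssum9 n ε| * Real.sqrt (|Ssum9 n ε| ^ 3)) ^ 2 := by
          congr 1; exact (Finset.sum_congr rfl fun ε _ => hmt ε).symm
      _ ≤ (∑ ε : Fin n → Bool, Real.sqrt |Ssum9 n ε| ^ 2)
          * ∑ ε : Fin n → Bool, Real.sqrt (|Ssum9 n ε| ^ 3) ^ 2 :=
          Finset.sum_mul_sq_le_sq_mul_sq _ _ _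
      _ = A * C := by
          congr 1
          · exact Finset.sum_congr rfl fun ε _ => Real.sq_sqrt (abs_nonneg _)
          · exact Finset.sum_congr rfl fun ε _ =>
              Real.sq_sqrt (pow_nonneg (abs_nonneg _) 3)
  -- Cauchy-Schwarz 2 : C^2 ≤ B * E
  have h2 : C ^ 2 ≤ B * E := by
    calc C ^ 2 = (∑ ε : Fin n → Bool, |Ssum9 n ε| * Ssum9 n ε ^ 2) ^ 2 := by
          congr 1; exact Finset.sum_congr rfl fun ε _ => by
            rw [← sq_abs]; ring
      _ ≤ (∑ ε : Fin n → Bool, |Ssum9 n ε| ^ 2)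
          * ∑ ε : Fin n → Bool, (Ssum9 n ε ^ 2) ^ 2 :=
          Finset.sum_mul_sq_le_sq_mul_sq _ _ _
      _ = B * E := by
          congr 1
          · show _ = (n:ℝ) * 2 ^ n
            rw [← moment2]; exact Finset.sum_congr rfl fun ε _ => sq_abs _
          · show _ = (3 * (n:ℝ)^2 - 2 * (n:ℝ)) * 2 ^ n
            rw [← moment4]; exact Finset.sum_congr rfl fun ε _ => by ring
  have h3 : B ^ 3 ≤ A ^ 2 * E := by
    have step : B ^ 3 * B ≤ (A ^ 2 * E) * B := by
      calc B ^ 3 * B = (B ^ 2) ^ 2 := by ring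
        _ ≤ (A * C) ^ 2 := pow_le_pow_left₀ (sq_nonneg B) h1 2
        _ = A ^ 2 * C ^ 2 := by ring
        _ ≤ A ^ 2 * (B * E) := mul_le_mul_of_nonneg_left h2 (sq_nonneg A)
        _ = (A ^ 2 * E) * B := by ring
    exact le_of_mul_le_mul_right step hBpos
  set x : ℝ := Real.sqrt ((n : ℝ) / 3) * 2 ^ n with hx_def
  have hx0 : 0 ≤ x := mul_nonneg (Real.sqrt_nonneg _) (by positivity)
  have hx2 : x ^ 2 = (n : ℝ) / 3 * q ^ 2 := by
    rw [hx_def, mul_pow, Real.sq_sqrt (by positivity)]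
  have h4 : x ^ 2 * E ≤ B ^ 3 := by
    rw [hx2, hE_def, hB_def]
    nlinarith [hq.le, sq_nonneg ((n:ℝ) * q)]
  have h5 : x ^ 2 ≤ A ^ 2 :=
    le_of_mul_le_mul_right (h4.trans h3) hEpos
  calc x = Real.sqrt (x ^ 2) := (Real.sqrt_sq hx0).symm
    _ ≤ Real.sqrt (A ^ 2) := Real.sqrt_le_sqrt h5
    _ = A := Real.sqrt_sq hA0


lemma sumW9 (n : ℕ) :
    ∑ ε : Fin (n+1) → Bool, |W9 (n+1) ε| = 2 * ∑ g : Fin n → Bool, |Ssum9 n g| := by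
  rw [sum_cons9 (fun ε => |W9 (n+1) ε|)]
  have h : ∀ (a : Bool) (g : Fin n → Bool), W9 (n+1) (Fin.cons a g) = Ssum9 n g := by
    intro a g
    rw [W9, Fin.sum_univ_succ]
    simp [Ssum9]
  simp only [h]
  rw [Fintype.sum_bool]
  ring

set_option maxHeartbeats 1000000 in
/-- lower bound for OCO with finite memory, `p`-norm. There is an absolute
constant `c > 0` such that for every `p ≥ 1`, `L > 0`, memory length `m ≥ 1`, number of blocks
`N ≥ 2`, horizon `T = N·m`, and every adaptive algorithm (decisions `x ε t ∈ [−1,1]` where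
`x ε t` depends only on the signs of the blocks before the block of round `t`), the expected
policy regret against the losses `fVal9` is at least `c L √(T m^{(p+2)/p})`. -/
theorem stmt_9 : ∃ c > (0:ℝ),
    ∀ (p L : ℝ) (m N T : ℕ), 1 ≤ p → 0 < L → 1 ≤ m → 2 ≤ N → T = N * m →
    ∀ x : (Fin N → Bool) → ℕ → ℝ,
      (∀ ε t, x ε t ∈ Set.Icc (-1:ℝ) 1) →
      (∀ (t : ℕ) (ε ε' : Fin N → Bool), 1 ≤ t → t ≤ T →
        (∀ k : Fin N, (k : ℕ) < (t + m - 2) / m → ε k = ε' k) → x ε t = x ε' t) →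
      ((2 ^ N : ℝ))⁻¹ *
        (∑ ε : Fin N → Bool,
          ((∑ t ∈ Finset.Icc 1 T, fVal9 p L m N ε (x ε) t)
            - sInf ((fun y : ℝ => ∑ t ∈ Finset.Icc 1 T, fVal9 p L m N ε (fun _ => y) t) ''
                Set.Icc (-1:ℝ) 1)))
      ≥ c * L * Real.sqrt ((T : ℝ) * (m : ℝ) ^ ((p + 2) / p)) := by
  refine ⟨1/5, by norm_num, ?_⟩
  intro p L m N T hp hL hm hN hT x hxmem hxadapt
  subst hT
  obtain ⟨n, rfl⟩ : ∃ n, N = n + 1 := ⟨N - 1, by omega⟩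
  have hn1 : 1 ≤ n := by omega
  have hp0 : (0:ℝ) < p := by linarith
  set M : ℝ := (m : ℝ) with hM_def
  have hM1 : (1:ℝ) ≤ M := by rw [hM_def]; exact_mod_cast hm
  have hM0 : (0:ℝ) < M := by linarith
  set γ : ℝ := (1 - p) / p with hγ_def
  set CST : ℝ := L * M ^ γ * (M * (M + 1) / 2) with hCST_def
  have hCST0 : 0 ≤ CST := by
    rw [hCST_def]
    have h1 := Real.rpow_nonneg hM0.le γ
    have h2 : 0 ≤ M * (M + 1) / 2 := by nlinarith
    positivity
  have hIc : ∀ ε : Fin (n+1) → Bool,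
      sInf ((fun y : ℝ => ∑ t ∈ Finset.Icc 1 ((n+1)*m), fVal9 p L m (n+1) ε (fun _ => y) t) ''
          Set.Icc (-1:ℝ) 1) = -(CST * |W9 (n+1) ε|) := by
    intro ε
    have hfun : (fun y : ℝ => ∑ t ∈ Finset.Icc 1 ((n+1)*m), fVal9 p L m (n+1) ε (fun _ => y) t)
        = fun y : ℝ => (CST * W9 (n+1) ε) * y := by
      funext y
      rw [const_sum9 p L m (n+1) hm ε y]
    rw [hfun, sInf_linear9, abs_mul, abs_of_nonneg hCST0]
  have hsummand : ∀ ε : Fin (n+1) → Bool,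
      ((∑ t ∈ Finset.Icc 1 ((n+1)*m), fVal9 p L m (n+1) ε (x ε) t)
        - sInf ((fun y : ℝ => ∑ t ∈ Finset.Icc 1 ((n+1)*m), fVal9 p L m (n+1) ε (fun _ => y) t) ''
            Set.Icc (-1:ℝ) 1))
      = (∑ t ∈ Finset.Icc 1 ((n+1)*m), fVal9 p L m (n+1) ε (x ε) t) + CST * |W9 (n+1) ε| := by
    intro ε
    rw [hIc ε]
    ring
  rw [Finset.sum_congr rfl fun ε _ => hsummand ε, Finset.sum_add_distrib,
    alg_zero9 p L m (n+1) ((n+1)*m) hm rfl x hxadapt, zero_add, ← Finset.mul_sum, sumW9]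
  have hkh := khintchine9 n hn1
  have hstep1 : ((2:ℝ)^(n+1))⁻¹ * (CST * (2 * ∑ g : Fin n → Bool, |Ssum9 n g|))
      ≥ ((2:ℝ)^(n+1))⁻¹ * (CST * (2 * (Real.sqrt ((n:ℝ)/3) * 2 ^ n))) := by
    apply mul_le_mul_of_nonneg_left _ (by positivity)
    apply mul_le_mul_of_nonneg_left _ hCST0
    linarith
  refine le_trans ?_ hstep1
  have hcollapse : ((2:ℝ)^(n+1))⁻¹ * (CST * (2 * (Real.sqrt ((n:ℝ)/3) * 2 ^ n)))
      = CST * Real.sqrt ((n:ℝ)/3) := by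
    rw [pow_succ]
    have h2n : (0:ℝ) < 2 ^ n := by positivity
    field_simp
  rw [hcollapse]
  -- final analytic inequality
  set δ : ℝ := (p + 2) / p with hδ_def
  set Nr : ℝ := ((n:ℝ) + 1) with hNr_def
  have hT' : (((n+1)*m : ℕ) : ℝ) = Nr * M := by rw [hNr_def, hM_def]; push_cast; ring
  have hN2 : (2:ℝ) ≤ Nr := by
    rw [hNr_def]
    have : (1:ℝ) ≤ (n:ℝ) := by exact_mod_cast hn1
    linarith
  have hx0 : 0 ≤ (1/5 : ℝ) * L * Real.sqrt ((((n+1)*m : ℕ):ℝ) * M ^ δ) := by positivity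
  have hy0 : 0 ≤ CST * Real.sqrt ((n:ℝ)/3) := by positivity
  have hkey : M ^ δ * M = (M ^ γ) ^ 2 * M ^ (4:ℕ) := by
    rw [← Real.rpow_natCast (M ^ γ) 2, ← Real.rpow_mul hM0.le,
      ← Real.rpow_natCast M 4, ← Real.rpow_add hM0]
    nth_rewrite 2 [← Real.rpow_one M]
    rw [← Real.rpow_add hM0]
    congr 1
    rw [hδ_def, hγ_def]
    field_simp
    ring
  have hsq : ((1/5 : ℝ) * L * Real.sqrt ((((n+1)*m : ℕ):ℝ) * M ^ δ)) ^ 2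
      ≤ (CST * Real.sqrt ((n:ℝ)/3)) ^ 2 := by
    rw [mul_pow, mul_pow, mul_pow,
      Real.sq_sqrt (by positivity : (0:ℝ) ≤ (((n+1)*m : ℕ):ℝ) * M ^ δ),
      Real.sq_sqrt (by positivity : (0:ℝ) ≤ (n:ℝ)/3)]
    rw [hT', hCST_def]
    have hnN : (n:ℝ) = Nr - 1 := by rw [hNr_def]; ring
    rw [hnN]
    have hMδ : (0:ℝ) < M ^ δ := Real.rpow_pos_of_pos hM0 _
    have hMγ : (0:ℝ) < M ^ γ := Real.rpow_pos_of_pos hM0 _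
    have hL2 : (0:ℝ) < L^2 := by positivity
    have hge : (M ^ δ * M) / 4 ≤ (M ^ γ)^2 * (M*(M+1)/2)^2 := by
      rw [hkey]
      have h1 : M ^ (4:ℕ) / 4 ≤ (M*(M+1)/2)^2 := by
        nlinarith [mul_pos (mul_pos hM0 hM0) hM0, mul_pos hM0 hM0]
      nlinarith [sq_nonneg (M ^ γ), pow_pos hM0 4]
    calc (1/5 : ℝ)^2 * L^2 * (Nr * M * M ^ δ)
        = L^2 * ((M ^ δ * M)/4) * ((4/25) * Nr) := by ring
      _ ≤ L^2 * ((M ^ δ * M)/4) * ((Nr - 1)/3) := by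
          apply mul_le_mul_of_nonneg_left _ (by positivity)
          linarith
      _ ≤ L^2 * ((M ^ γ)^2 * (M*(M+1)/2)^2) * ((Nr - 1)/3) := by
          apply mul_le_mul_of_nonneg_right _ (by linarith)
          exact mul_le_mul_of_nonneg_left hge hL2.le
      _ = (L * M ^ γ * (M*(M+1)/2))^2 * ((Nr - 1)/3) := by ring
  have hfin := Real.sqrt_le_sqrt hsq
  rw [Real.sqrt_sq hx0, Real.sqrt_sq hy0] at hfin
  exact hfin
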